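/- Let (Γ, L) be a strongly connected periodic graph with periodic realization Φ and vertex x₀. Then there exist constants C′₁, C′₂ ≥ 0 such that for every vertex y of Γ, d_{P_Γ,Φ}(x₀, y) − C′₁ ≤ d_Γ(x₀, y) ≤ d_{P_Γ,Φ}(x₀, y) + C′₂. In other words, the graph distance from x₀ differs from the gauge distance of the growth polytope by a bounded amount. -/

import Mathlib

open Pointwise

/-- An `n`-dimensional periodic graph, presented concretely: since the action of `L ≅ ℤⁿ` on the
vertex/edge sets is free with finite quotient, vertices are `(Fin n → ℤ) × V0` and edges are
translates of finitely many edge classes `E0`; the class `e` joins `(0, srcV e)` to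
`(vec e, tgtV e)` and has weight `wt e > 0`. -/
structure PeriodicGraph (n : ℕ) where
  V0 : Type
  E0 : Type
  fintypeV0 : Fintype V0
  fintypeE0 : Fintype E0
  srcV : E0 → V0
  tgtV : E0 → V0
  vec : E0 → Fin n → ℤ
  wt : E0 → ℕ
  wt_pos : ∀ e, 0 < wt e

namespace PeriodicGraph

variable {n : ℕ}

/-- `Reaches G x y w`: there is a directed walk in `Γ` from `x` to `y` of total weight `w`. -/
inductive Reaches (G : PeriodicGraph n) :
    ((Fin n → ℤ) × G.V0) → ((Fin n → ℤ) × G.V0) → ℕ → Prop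
  | refl (x : (Fin n → ℤ) × G.V0) : Reaches G x x 0
  | tail {x : (Fin n → ℤ) × G.V0} {w : ℕ} (u : Fin n → ℤ) (e : G.E0) :
      Reaches G x (u, G.srcV e) w → Reaches G x (u + G.vec e, G.tgtV e) (w + G.wt e)

/-- `Γ` is strongly connected: any vertex reaches any other by a directed walk. -/
def StronglyConnected (G : PeriodicGraph n) : Prop :=
  ∀ x y : (Fin n → ℤ) × G.V0, ∃ w : ℕ, G.Reaches x y w

/-- The weighted graph distance `d_Γ(x,y)` (the minimal weight of a walk from `x` to `y`). -/
noncomputable def dist (G : PeriodicGraph n) (x y : (Fin n → ℤ) × G.V0) : ℕ :=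
  sInf {w : ℕ | G.Reaches x y w}

/-- A cycle in the quotient graph `Γ/L`: a nonempty chained list of edge classes, closed, whose
visited vertices are pairwise distinct. -/
def IsQCycle (G : PeriodicGraph n) (l : List G.E0) : Prop :=
  ∃ h : l ≠ [], l.Chain' (fun e f => G.tgtV e = G.srcV f) ∧
    G.tgtV (l.getLast h) = G.srcV (l.head h) ∧ (l.map G.tgtV).Nodup

/-- The net translation vector `μ(⟨q⟩)` of a quotient walk. -/
def qvec (G : PeriodicGraph n) (l : List G.E0) : Fin n → ℤ := (l.map G.vec).sum

/-- The total weight `w(q)` of a quotient walk. -/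
def qwt (G : PeriodicGraph n) (l : List G.E0) : ℕ := (l.map G.wt).sum

/-- The normalization `ν(q) = μ(⟨q⟩)/w(q)` of a quotient cycle. -/
noncomputable def nu (G : PeriodicGraph n) (l : List G.E0) : Fin n → ℝ :=
  (G.qwt l : ℝ)⁻¹ • fun i => (G.qvec l i : ℝ)

/-- The growth polytope `P_Γ`: the convex hull of `0` together with the normalized translation
vectors of all cycles of `Γ/L`. -/
noncomputable def growthPolytope (G : PeriodicGraph n) : Set (Fin n → ℝ) :=
  convexHull ℝ (insert 0 {x : Fin n → ℝ | ∃ l : List G.E0, G.IsQCycle l ∧ x = G.nu l})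

/-- The gauge `d_P(y) = inf {t ≥ 0 | y ∈ t·P}` of a set `P`. -/
noncomputable def pgauge {n : ℕ} (P : Set (Fin n → ℝ)) (y : Fin n → ℝ) : ℝ :=
  sInf {t : ℝ | 0 ≤ t ∧ y ∈ t • P}

/-- A periodic realization `Φ : V_Γ → L ⊗ ℝ`, i.e. `Φ(u + x) = u + Φ(x)` for `u ∈ L`. -/
def IsRealization (G : PeriodicGraph n) (Φ : (Fin n → ℤ) × G.V0 → Fin n → ℝ) : Prop :=
  ∀ (u : Fin n → ℤ) (x : (Fin n → ℤ) × G.V0),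
    Φ (u + x.1, x.2) = (fun i => (u i : ℝ)) + Φ x

/-- `x₀` is `P`-initial: every nonzero vertex (extreme point) `u` of `P_Γ` is the normalized
vector of some cycle of `Γ/L` whose support contains the image of `x₀`. -/
def PInitial (G : PeriodicGraph n) (x₀ : (Fin n → ℤ) × G.V0) : Prop :=
  ∀ u ∈ Set.extremePoints ℝ G.growthPolytope, u ≠ 0 →
    ∃ l : List G.E0, G.IsQCycle l ∧ G.nu l = u ∧ x₀.2 ∈ l.map G.tgtV

/-! ### auxiliary -/

/-- integer-to-real cast of lattice vectors -/
def zc {n : ℕ} (u : Fin n → ℤ) : Fin n → ℝ := fun i => (u i : ℝ)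

@[simp] lemma zc_add (a b : Fin n → ℤ) : zc (a + b) = zc a + zc b := by
  funext i; simp [zc]

@[simp] lemma zc_sub (a b : Fin n → ℤ) : zc (a - b) = zc a - zc b := by
  funext i; simp [zc]

@[simp] lemma zc_zero : zc (0 : Fin n → ℤ) = 0 := by funext i; simp [zc]

@[simp] lemma zc_nsmul (m : ℕ) (a : Fin n → ℤ) : zc (m • a) = (m : ℝ) • zc a := by
  funext i; simp [zc]

@[simp] lemma qvec_nil (G : PeriodicGraph n) : G.qvec [] = 0 := rfl

@[simp] lemma qwt_nil (G : PeriodicGraph n) : G.qwt [] = 0 := rfl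

@[simp] lemma qvec_append (G : PeriodicGraph n) (l₁ l₂ : List G.E0) :
    G.qvec (l₁ ++ l₂) = G.qvec l₁ + G.qvec l₂ := by simp [qvec]

@[simp] lemma qwt_append (G : PeriodicGraph n) (l₁ l₂ : List G.E0) :
    G.qwt (l₁ ++ l₂) = G.qwt l₁ + G.qwt l₂ := by simp [qwt]

@[simp] lemma qvec_cons (G : PeriodicGraph n) (e : G.E0) (l : List G.E0) :
    G.qvec (e :: l) = G.vec e + G.qvec l := by simp [qvec]

@[simp] lemma qwt_cons (G : PeriodicGraph n) (e : G.E0) (l : List G.E0) :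
    G.qwt (e :: l) = G.wt e + G.qwt l := by simp [qwt]

lemma qwt_pos (G : PeriodicGraph n) {l : List G.E0} (h : l ≠ []) : 0 < G.qwt l := by
  cases l with
  | nil => exact absurd rfl h
  | cons e t => simpa using Nat.lt_of_lt_of_le (G.wt_pos e) (Nat.le_add_right _ _)

lemma Reaches.trans (G : PeriodicGraph n) {x y z : (Fin n → ℤ) × G.V0} {w w' : ℕ}
    (h1 : G.Reaches x y w) (h2 : G.Reaches y z w') : G.Reaches x z (w + w') := by
  induction h2 with
  | refl => exact h1
  | tail u e h ih => rw [← Nat.add_assoc]; exact Reaches.tail u e ih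

lemma Reaches.translate (G : PeriodicGraph n) {x y : (Fin n → ℤ) × G.V0} {w : ℕ}
    (u : Fin n → ℤ) (h : G.Reaches x y w) :
    G.Reaches (u + x.1, x.2) (u + y.1, y.2) w := by
  induction h with
  | refl => exact Reaches.refl _
  | tail u' e h ih =>
      have := Reaches.tail (u + u') e ih
      rwa [add_assoc] at this

lemma reaches_of_list (G : PeriodicGraph n) (l : List G.E0) :
    l.Chain' (fun e f => G.tgtV e = G.srcV f) →
    ∀ a b : G.V0, (∀ e ∈ l.head?, G.srcV e = a) → (∀ e ∈ l.getLast?, G.tgtV e = b) →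
    (l = [] → a = b) → ∀ u : Fin n → ℤ, G.Reaches (u, a) (u + G.qvec l, b) (G.qwt l) := by
  induction l using List.reverseRecOn with
  | nil =>
      intro _ a b _ _ hab u
      rcases hab rfl
      simpa using Reaches.refl (u, a)
  | append_singleton l e ih =>
      intro hc a b hhead hlast _ u
      have hb : G.tgtV e = b := hlast e (by simp)
      change List.IsChain _ _ at hc
      rw [List.isChain_append] at hc
      obtain ⟨hc1, -, hjun⟩ := hc
      cases l with
      | nil =>
          have ha : G.srcV e = a := hhead e (by simp)
          have := Reaches.tail (G := G) u e (Reaches.refl (u, G.srcV e))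
          rw [ha, hb] at this
          simpa using this
      | cons f t =>
          have hne : (f :: t : List G.E0) ≠ [] := by simp
          have hstep : G.Reaches (u, a) (u + G.qvec (f :: t), G.tgtV ((f :: t).getLast hne))
              (G.qwt (f :: t)) := by
            apply ih hc1 a _ (by simpa using hhead)
            · intro e' he'
              rw [List.getLast?_eq_getLast hne] at he'
              simp at he'
              rw [he']
            · simp
          have hsrc : G.tgtV ((f :: t).getLast hne) = G.srcV e := by
            apply hjun
            · rw [List.getLast?_eq_getLast hne]; simp
            · simp
          rw [hsrc] at hstep
          have := Reaches.tail (u + G.qvec (f :: t)) e hstep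
          rw [hb] at this
          simpa [add_assoc] using this

lemma exists_list_of_reaches (G : PeriodicGraph n) {x y : (Fin n → ℤ) × G.V0} {w : ℕ}
    (h : G.Reaches x y w) :
    ∃ l : List G.E0, l.Chain' (fun e f => G.tgtV e = G.srcV f) ∧
      G.qvec l = y.1 - x.1 ∧ G.qwt l = w ∧
      (∀ e ∈ l.head?, G.srcV e = x.2) ∧ (∀ e ∈ l.getLast?, G.tgtV e = y.2) ∧
      (l = [] → x = y) := by
  induction h with
  | refl => exact ⟨[], List.IsChain.nil, by simp, by simp, by simp, by simp, fun _ => rfl⟩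
  | tail u e h ih =>
      obtain ⟨l, hc, hv, hw, hh, hl, hnil⟩ := ih
      refine ⟨l ++ [e], ?_, ?_, ?_, ?_, ?_, by simp⟩
      · change List.IsChain _ _
        rw [List.isChain_append]
        refine ⟨hc, by simp, ?_⟩
        intro a ha b hb
        simp at hb
        subst hb
        exact hl a ha
      · simp [hv]; abel
      · simp [hw]
      · intro e' he'
        rw [List.head?_append] at he'
        cases l with
        | nil =>
            simp at he'
            subst he'
            exact (congrArg Prod.snd (hnil rfl)).symm
        | cons f t =>
            simp at he'
            exact hh e' (by simp [he'])
      · intro e' he'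
        rw [List.getLast?_concat] at he'
        simp at he'
        subst he'
        rfl

lemma zero_mem_P (G : PeriodicGraph n) : (0 : Fin n → ℝ) ∈ G.growthPolytope :=
  subset_convexHull ℝ _ (Set.mem_insert _ _)

lemma P_nonempty (G : PeriodicGraph n) : G.growthPolytope.Nonempty := ⟨0, G.zero_mem_P⟩

lemma convex_P (G : PeriodicGraph n) : Convex ℝ G.growthPolytope := convex_convexHull ℝ _

lemma nu_mem_P (G : PeriodicGraph n) {l : List G.E0} (h : G.IsQCycle l) :
    G.nu l ∈ G.growthPolytope :=
  subset_convexHull ℝ _ (Set.mem_insert_iff.2 (Or.inr ⟨l, h, rfl⟩))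

lemma mem_smul_add (G : PeriodicGraph n) {s t : ℝ} {a b : Fin n → ℝ}
    (hs : 0 ≤ s) (ht : 0 ≤ t) (ha : a ∈ s • G.growthPolytope)
    (hb : b ∈ t • G.growthPolytope) : a + b ∈ (s + t) • G.growthPolytope := by
  rw [Convex.add_smul G.convex_P hs ht]
  exact Set.add_mem_add ha hb

lemma smul_mono_P (G : PeriodicGraph n) {s t : ℝ} {a : Fin n → ℝ}
    (hs : 0 ≤ s) (hst : s ≤ t) (ha : a ∈ s • G.growthPolytope) :
    a ∈ t • G.growthPolytope := by
  have h0 : (0 : Fin n → ℝ) ∈ (t - s) • G.growthPolytope :=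
    ⟨0, G.zero_mem_P, smul_zero _⟩
  have := G.mem_smul_add hs (by linarith) ha h0
  simpa using this

/-- the key decomposition: the cast translation vector of a chained closed walk lies in
`w • P`. -/
lemma closed_mem_smul (G : PeriodicGraph n) :
    ∀ (l : List G.E0), l.Chain' (fun e f => G.tgtV e = G.srcV f) →
    (∀ x ∈ l.getLast?, ∀ y ∈ l.head?, G.tgtV x = G.srcV y) →
    zc (G.qvec l) ∈ (G.qwt l : ℝ) • G.growthPolytope := by
  have main : ∀ (N : ℕ) (l : List G.E0), l.length ≤ N →
      l.Chain' (fun e f => G.tgtV e = G.srcV f) →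
      (∀ x ∈ l.getLast?, ∀ y ∈ l.head?, G.tgtV x = G.srcV y) →
      zc (G.qvec l) ∈ (G.qwt l : ℝ) • G.growthPolytope := by
    intro N
    induction N with
    | zero =>
        intro l hl _ _
        have : l = [] := List.length_eq_zero_iff.1 (Nat.le_zero.1 hl)
        subst this
        rw [Set.mem_smul_set]
        exact ⟨0, G.zero_mem_P, by simp⟩
    | succ N ih =>
        intro l hlen hchain hclosed
        rcases eq_or_ne l [] with rfl | hne
        · rw [Set.mem_smul_set]; exact ⟨0, G.zero_mem_P, by simp⟩
        by_cases hnodup : (l.map G.tgtV).Nodup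
        · -- simple cycle
          have hcyc : G.IsQCycle l := by
            refine ⟨hne, hchain, ?_, hnodup⟩
            have h1 := hclosed (l.getLast hne) (by rw [List.getLast?_eq_getLast hne]; rfl)
              (l.head hne) (by rw [List.head?_eq_head hne]; rfl)
            exact h1
          have hwpos : (0 : ℝ) < (G.qwt l : ℝ) := by exact_mod_cast G.qwt_pos hne
          rw [Set.mem_smul_set]
          refine ⟨G.nu l, G.nu_mem_P hcyc, ?_⟩
          show (G.qwt l : ℝ) • ((G.qwt l : ℝ)⁻¹ • fun i => (G.qvec l i : ℝ)) = zc (G.qvec l)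
          rw [smul_inv_smul₀ (ne_of_gt hwpos)]
          rfl
        · -- extract a repeated vertex
          obtain ⟨a, ha⟩ := List.exists_duplicate_iff_not_nodup.2 hnodup
          have hsub : [a, a].Sublist (l.map G.tgtV) := List.duplicate_iff_sublist.1 ha
          obtain ⟨l', hl'sub, hl'map⟩ := List.sublist_map_iff.1 hsub
          obtain ⟨e, l'', he, hfe, hmap''⟩ := List.map_eq_cons_iff.1 hl'map.symm
          obtain ⟨f, l''', hf, hff, hmap'''⟩ := List.map_eq_cons_iff.1 hmap''
          have hl''' : l''' = [] := by simpa using congrArg List.length hmap'''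
          subst hl'''
          subst hf
          subst he
          -- [e, f] <+ l with tgtV e = tgtV f = a
          rw [List.cons_sublist_iff] at hl'sub
          obtain ⟨r₁, r₂, hr, her₁, hfr₂⟩ := hl'sub
          rw [List.singleton_sublist] at hfr₂
          obtain ⟨s₁, s₂, hs⟩ := List.append_of_mem her₁
          obtain ⟨t₁, t₂, ht⟩ := List.append_of_mem hfr₂
          -- l = s₁ ++ e :: (s₂ ++ t₁) ++ f :: t₂
          have hldecomp : l = s₁ ++ e :: ((s₂ ++ t₁) ++ f :: t₂) := by
            rw [hr, hs, ht]; simp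
          set M : List G.E0 := s₂ ++ t₁ with hM
          -- chain conditions
          change List.IsChain _ _ at hchain
          rw [hldecomp, List.isChain_append, List.isChain_cons] at hchain
          obtain ⟨hC1, ⟨hJ2, hC3⟩, hJ1⟩ := hchain
          rw [List.isChain_append, List.isChain_cons] at hC3
          obtain ⟨hC4, ⟨hJ4, hC6⟩, hJ3⟩ := hC3
          -- the two closed pieces
          set mid : List G.E0 := M ++ [f] with hmid
          set out : List G.E0 := s₁ ++ e :: t₂ with hout
          have hmidchain : mid.Chain' (fun e f => G.tgtV e = G.srcV f) := by
            change List.IsChain _ _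
            rw [hmid, List.isChain_append]
            exact ⟨hC4, by simp, by simpa using hJ3⟩
          have houtchain : out.Chain' (fun e f => G.tgtV e = G.srcV f) := by
            change List.IsChain _ _
            rw [hout, List.isChain_append, List.isChain_cons]
            refine ⟨hC1, ⟨?_, hC6⟩, by simpa using hJ1⟩
            intro y hy
            have := hJ4 y hy
            rw [hff, ← hfe] at this
            exact this
          have hmidclosed : ∀ x ∈ mid.getLast?, ∀ y ∈ mid.head?, G.tgtV x = G.srcV y := by
            intro x hx y hy
            rw [hmid, List.getLast?_concat] at hx
            simp only [Option.mem_def, Option.some_inj] at hx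
            subst hx
            have hy' : G.tgtV e = G.srcV y := by
              apply hJ2
              cases hMc : M with
              | nil =>
                  rw [hmid, hMc] at hy
                  simpa using hy
              | cons m M' =>
                  rw [hmid, hMc] at hy
                  simpa using hy
            rw [hff, ← hfe]; exact hy'
          have houtclosed : ∀ x ∈ out.getLast?, ∀ y ∈ out.head?, G.tgtV x = G.srcV y := by
            intro x hx y hy
            have hheadeq : out.head? = l.head? := by
              rw [hout, hldecomp, List.head?_append, List.head?_append]; rfl
            rw [hheadeq] at hy
            rw [hout, List.getLast?_append] at hx
            cases ht₂ : t₂ with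
            | nil =>
                rw [ht₂] at hx
                simp [Option.or] at hx
                subst hx
                have hlast : l.getLast? = some f := by
                  rw [hldecomp, ht₂, List.getLast?_append]
                  have h2 : (e :: (M ++ [f])).getLast? = some f := by
                    rw [show e :: (M ++ [f]) = (e :: M) ++ [f] from rfl, List.getLast?_concat]
                  rw [h2]; rfl
                have := hclosed f (by rw [hlast]; rfl) y hy
                rw [hfe, ← hff]; exact this
            | cons c t₂' =>
                rw [ht₂] at hx
                have hd := List.getLast?_eq_getLast (l := c :: t₂') (by simp)
                have hx2 : (e :: c :: t₂').getLast? = some ((c :: t₂').getLast (by simp)) := by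
                  rw [List.getLast?_cons_cons, hd]
                rw [hx2] at hx
                have hx3 : (c :: t₂').getLast (by simp) = x := by
                  simpa [Option.or] using hx
                have hx' : x ∈ l.getLast? := by
                  rw [hldecomp, ht₂]
                  have h3 : s₁ ++ e :: (M ++ f :: c :: t₂')
                      = (s₁ ++ e :: (M ++ [f])) ++ c :: t₂' := by simp
                  rw [h3, List.getLast?_append, hd]
                  simp [Option.or, hx3]
                exact hclosed x hx' y hy
          -- lengths
          have hmlen : mid.length ≤ N := by
            rw [hldecomp] at hlen
            simp [hmid, hM] at hlen ⊢
            omega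
          have holen : out.length ≤ N := by
            rw [hldecomp] at hlen
            simp [hout] at hlen ⊢
            omega
          have h1 := ih mid hmlen hmidchain hmidclosed
          have h2 := ih out holen houtchain houtclosed
          have hsum := G.mem_smul_add (by positivity) (by positivity) h1 h2
          have hq1 : G.qvec l = G.qvec mid + G.qvec out := by
            rw [hldecomp, hmid, hout, hM]
            simp [qvec]
            abel
          have hq2 : (G.qwt l : ℝ) = (G.qwt mid : ℝ) + (G.qwt out : ℝ) := by
            rw [hldecomp, hmid, hout, hM]
            simp [qwt]
            ring
          rw [hq1, zc_add, hq2]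
          exact hsum
  intro l hc hcl
  exact main l.length l le_rfl hc hcl

lemma cycle_reaches (G : PeriodicGraph n) {l : List G.E0} (hne : l ≠ [])
    (hchain : l.Chain' (fun e f => G.tgtV e = G.srcV f))
    (hclosed : G.tgtV (l.getLast hne) = G.srcV (l.head hne)) :
    ∀ (m : ℕ) (u : Fin n → ℤ),
      G.Reaches (u, G.srcV (l.head hne)) (u + m • G.qvec l, G.srcV (l.head hne))
        (m * G.qwt l) := by
  intro m
  induction m with
  | zero => intro u; simpa using Reaches.refl _
  | succ m ih =>
      intro u
      have h1 : G.Reaches (u, G.srcV (l.head hne)) (u + G.qvec l, G.srcV (l.head hne))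
          (G.qwt l) := by
        have := G.reaches_of_list l hchain (G.srcV (l.head hne)) (G.srcV (l.head hne))
          (fun e he => by
            rw [List.head?_eq_head hne] at he
            simp only [Option.mem_def, Option.some_inj] at he
            rw [he])
          (fun e he => by
            rw [List.getLast?_eq_getLast hne] at he
            simp only [Option.mem_def, Option.some_inj] at he
            rw [← he]; exact hclosed)
          (fun h => absurd h hne) u
        exact this
      have h2 := ih (u + G.qvec l)
      have := Reaches.trans G h1 h2
      have heq : u + G.qvec l + m • G.qvec l = u + (m + 1) • G.qvec l := by
        rw [succ_nsmul]; abel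
      rw [heq] at this
      have hw : G.qwt l + m * G.qwt l = (m + 1) * G.qwt l := by ring
      rwa [hw] at this

lemma tour (G : PeriodicGraph n) {X : Type*} (v₀ : G.V0) (δ : X → Fin n → ℤ) (ω : X → ℕ) :
    ∀ (F : Finset X), (∀ p ∈ F, ∀ u : Fin n → ℤ, G.Reaches (u, v₀) (u + δ p, v₀) (ω p)) →
    ∀ u : Fin n → ℤ, G.Reaches (u, v₀) (u + ∑ p ∈ F, δ p, v₀) (∑ p ∈ F, ω p) := by
  classical
  intro F
  induction F using Finset.induction_on with
  | empty => intro _ u; simpa using Reaches.refl _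
  | @insert a F ha ih =>
      intro h u
      have h1 := h a (Finset.mem_insert_self a F) u
      have h2 := ih (fun p hp => h p (Finset.mem_insert_of_mem hp)) (u + δ a)
      have := Reaches.trans G h1 h2
      rw [Finset.sum_insert ha, Finset.sum_insert ha]
      have heq : u + δ a + ∑ p ∈ F, δ p = u + (δ a + ∑ p ∈ F, δ p) := by abel
      rwa [heq] at this

lemma sum_mem_smul (G : PeriodicGraph n) {ι : Type*} (F : Finset ι) (f : ι → Fin n → ℝ)
    (t : ι → ℝ) (ht : ∀ i ∈ F, 0 ≤ t i) (hf : ∀ i ∈ F, f i ∈ t i • G.growthPolytope) :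
    (∑ i ∈ F, f i) ∈ (∑ i ∈ F, t i) • G.growthPolytope := by
  classical
  induction F using Finset.induction_on with
  | empty => simpa using ⟨0, G.zero_mem_P, smul_zero _⟩
  | @insert a F ha ih =>
      rw [Finset.sum_insert ha, Finset.sum_insert ha]
      exact G.mem_smul_add (ht a (Finset.mem_insert_self a F))
        (Finset.sum_nonneg fun i hi => ht i (Finset.mem_insert_of_mem hi))
        (hf a (Finset.mem_insert_self a F))
        (ih (fun i hi => ht i (Finset.mem_insert_of_mem hi))
          (fun i hi => hf i (Finset.mem_insert_of_mem hi)))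

/-- every (real) vector is absorbed by the growth polytope, provided the graph is strongly
connected. -/
lemma absorb (G : PeriodicGraph n) (hsc : G.StronglyConnected) (x₀ : (Fin n → ℤ) × G.V0)
    (x : Fin n → ℝ) : ∃ t : ℝ, 0 ≤ t ∧ x ∈ t • G.growthPolytope := by
  classical
  -- integer version
  have hint : ∀ u : Fin n → ℤ, ∃ t : ℝ, 0 ≤ t ∧ zc u ∈ t • G.growthPolytope := by
    intro u
    obtain ⟨w, hw⟩ := hsc x₀ (x₀.1 + u, x₀.2)
    obtain ⟨l, hc, hv, hwt, hh, hl, -⟩ := G.exists_list_of_reaches hw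
    have hvu : G.qvec l = u := by rw [hv]; simp
    have hclosed : ∀ a ∈ l.getLast?, ∀ b ∈ l.head?, G.tgtV a = G.srcV b := by
      intro a ha b hb
      rw [hl a ha, hh b hb]
    have := G.closed_mem_smul l hc hclosed
    rw [hvu] at this
    exact ⟨_, Nat.cast_nonneg _, this⟩
  -- real version
  have hterm : ∀ i : Fin n, ∃ t : ℝ, 0 ≤ t ∧
      (x i • fun j => if i = j then (1 : ℝ) else 0) ∈ t • G.growthPolytope := by
    intro i
    rcases le_or_gt 0 (x i) with hxi | hxi
    · obtain ⟨t, ht0, htm⟩ := hint (fun j => if i = j then 1 else 0)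
      have hzc : zc (fun j => if i = j then (1 : ℤ) else 0)
          = fun j => if i = j then (1 : ℝ) else 0 := by
        funext j; simp [zc, apply_ite]
      rw [hzc] at htm
      obtain ⟨p, hp, hpe⟩ := htm
      have hpe' : t • p = fun j => if i = j then (1 : ℝ) else 0 := hpe
      refine ⟨x i * t, by positivity, ⟨p, hp, ?_⟩⟩
      show (x i * t) • p = x i • fun j => if i = j then (1 : ℝ) else 0
      rw [← smul_smul, hpe']
    · obtain ⟨t, ht0, htm⟩ := hint (fun j => if i = j then (-1 : ℤ) else 0)
      have hzc : zc (fun j => if i = j then (-1 : ℤ) else 0)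
          = -fun j => if i = j then (1 : ℝ) else 0 := by
        funext j; simp [zc, apply_ite]
      rw [hzc] at htm
      obtain ⟨p, hp, hpe⟩ := htm
      have hpe' : t • p = -fun j => if i = j then (1 : ℝ) else 0 := hpe
      refine ⟨(-x i) * t, mul_nonneg (by linarith) ht0, ⟨p, hp, ?_⟩⟩
      show ((-x i) * t) • p = x i • fun j => if i = j then (1 : ℝ) else 0
      rw [← smul_smul, hpe', smul_neg, neg_smul, neg_neg]
  choose t ht0 htm using hterm
  refine ⟨∑ i, t i, Finset.sum_nonneg fun i _ => ht0 i, ?_⟩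
  have hx : x = ∑ i : Fin n, x i • fun j => if i = j then (1 : ℝ) else 0 := pi_eq_sum_univ x
  rw [hx]
  exact G.sum_mem_smul _ _ _ (fun i _ => ht0 i) (fun i _ => htm i)

lemma pgauge_nonneg (P : Set (Fin n → ℝ)) (x : Fin n → ℝ) : 0 ≤ pgauge P x :=
  Real.sInf_nonneg fun _ ht => ht.1

lemma pgauge_le {P : Set (Fin n → ℝ)} {x : Fin n → ℝ} {t : ℝ} (h0 : 0 ≤ t)
    (hm : x ∈ t • P) : pgauge P x ≤ t :=
  csInf_le ⟨0, fun _ hs => hs.1⟩ ⟨h0, hm⟩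

lemma nu_eq (G : PeriodicGraph n) (l : List G.E0) :
    G.nu l = (G.qwt l : ℝ)⁻¹ • zc (G.qvec l) := rfl

lemma mem_or_cases {α : Type*} {o o' : Option α} {a : α} (h : a ∈ o.or o') :
    a ∈ o ∨ (o = none ∧ a ∈ o') := by
  cases o with
  | none => exact Or.inr ⟨rfl, by simpa [Option.or] using h⟩
  | some b => left; simpa [Option.or] using h

lemma zc_finsum {ι : Type*} (F : Finset ι) (f : ι → Fin n → ℤ) :
    zc (∑ i ∈ F, f i) = ∑ i ∈ F, zc (f i) := by
  funext j
  simp [zc, Finset.sum_apply]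

end PeriodicGraph

/-- A function `ℕ → ℕ` is of quasi-polynomial type if it eventually agrees with a
quasi-polynomial. -/
def IsQuasiPolynomialType (f : ℕ → ℕ) : Prop :=
  ∃ Np : ℕ, 0 < Np ∧ ∃ Q : ℕ → Polynomial ℚ, ∃ M : ℕ,
    ∀ i : ℕ, M ≤ i → (f i : ℚ) = (Q (i % Np)).eval (i : ℚ)

/-- For a strongly connected periodic graph with periodic realization `Φ` and
vertex `x₀`, the graph distance differs from the gauge distance of the growth polytope by a
bounded amount: there are `C′₁, C′₂ ≥ 0` with
`d_{P_Γ,Φ}(x₀,y) − C′₁ ≤ d_Γ(x₀,y) ≤ d_{P_Γ,Φ}(x₀,y) + C′₂` for all `y`. -/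
theorem dist_pgauge_bounded_difference {n : ℕ} (G : PeriodicGraph n)
    (hsc : G.StronglyConnected)
    (Φ : (Fin n → ℤ) × G.V0 → Fin n → ℝ) (hΦ : G.IsRealization Φ)
    (x₀ : (Fin n → ℤ) × G.V0) :
    ∃ C₁ C₂ : ℝ, 0 ≤ C₁ ∧ 0 ≤ C₂ ∧ ∀ y : (Fin n → ℤ) × G.V0,
      PeriodicGraph.pgauge G.growthPolytope (Φ y - Φ x₀) - C₁ ≤ (G.dist x₀ y : ℝ) ∧
      (G.dist x₀ y : ℝ) ≤ PeriodicGraph.pgauge G.growthPolytope (Φ y - Φ x₀) + C₂ := by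
  classical
  open PeriodicGraph in
  haveI := G.fintypeV0
  haveI := G.fintypeE0
  set P := G.growthPolytope with hPdef
  set c : G.V0 → (Fin n → ℝ) := fun v => Φ (0, v) - Φ (0, x₀.2) with hcdef
  have hΦsplit : ∀ y : (Fin n → ℤ) × G.V0,
      Φ y - Φ x₀ = PeriodicGraph.zc (y.1 - x₀.1) + c y.2 := by
    intro y
    have h1 : Φ (y.1, y.2) = PeriodicGraph.zc y.1 + Φ (0, y.2) := by
      have := hΦ y.1 (0, y.2); simp only [add_zero] at this; exact this
    have h2 : Φ (x₀.1, x₀.2) = PeriodicGraph.zc x₀.1 + Φ (0, x₀.2) := by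
      have := hΦ x₀.1 (0, x₀.2); simp only [add_zero] at this; exact this
    have h3 : Φ y = PeriodicGraph.zc y.1 + Φ (0, y.2) := h1
    have h4 : Φ x₀ = PeriodicGraph.zc x₀.1 + Φ (0, x₀.2) := h2
    rw [h3, h4, hcdef, PeriodicGraph.zc_sub]
    funext i; simp only [Pi.add_apply, Pi.sub_apply]; ring
  -- connectors with zero displacement
  choose wconn hwconn using fun v v' : G.V0 => hsc ((0 : Fin n → ℤ), v) (0, v')
  -- absorption constants
  choose sA hsA0 hsAm using G.absorb hsc x₀
  -- finiteness of the set of cycle points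
  have hSfin : {x : Fin n → ℝ | ∃ l : List G.E0, G.IsQCycle l ∧ x = G.nu l}.Finite := by
    have hsub : {x : Fin n → ℝ | ∃ l : List G.E0, G.IsQCycle l ∧ x = G.nu l}
        ⊆ G.nu '' {l : List G.E0 | l.length ≤ Fintype.card G.V0} := by
      rintro x ⟨l, hl, rfl⟩
      refine ⟨l, ?_, rfl⟩
      obtain ⟨hne, -, -, hnodup⟩ := hl
      have := hnodup.length_le_card
      simpa using this
    exact Set.Finite.subset (Set.Finite.image _ (List.finite_length_le _ _)) hsub
  set Sfin := hSfin.toFinset with hSfindef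
  set F₀ : Finset (Fin n → ℝ) := insert 0 Sfin with hF₀
  have hPhull : P = convexHull ℝ (F₀ : Set (Fin n → ℝ)) := by
    rw [hF₀, Finset.coe_insert, Set.Finite.coe_toFinset]
    rfl
  -- choice of a cycle for each point
  have hcycex : ∀ p ∈ Sfin, ∃ l : List G.E0, G.IsQCycle l ∧ G.nu l = p := by
    intro p hp
    rw [hSfindef, Set.Finite.mem_toFinset] at hp
    obtain ⟨l, h1, h2⟩ := hp
    exact ⟨l, h1, h2.symm⟩
  set cyc : (Fin n → ℝ) → List G.E0 :=
    fun p => if h : p ∈ Sfin then (hcycex p h).choose else [] with hcycdef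
  have hcyc : ∀ p ∈ Sfin, G.IsQCycle (cyc p) ∧ G.nu (cyc p) = p := by
    intro p hp
    simp only [hcycdef, dif_pos hp]
    exact (hcycex p hp).choose_spec
  have hcycnil : ∀ p, p ∉ Sfin → cyc p = [] := by
    intro p hp; simp only [hcycdef, dif_neg hp]
  set shd : (Fin n → ℝ) → G.V0 :=
    fun p => if h : cyc p ≠ [] then G.srcV ((cyc p).head h) else x₀.2 with hshddef
  set connW : (Fin n → ℝ) → ℕ :=
    fun p => if p ∈ Sfin then wconn x₀.2 (shd p) + wconn (shd p) x₀.2 else 0 with hconnWdef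
  set Cc : ℕ := ∑ p ∈ F₀, connW p with hCcdef
  set M₁ : ℝ := ∑ p ∈ F₀, ∑ i : Fin n, |((G.qvec (cyc p)) i : ℝ)| with hM₁def
  set M₂ : ℝ := ∑ v : G.V0, ∑ i : Fin n, |c v i| with hM₂def
  set B : ℕ := ⌈M₁ + M₂⌉₊ with hBdef
  set Box : Finset (Fin n → ℤ) := Fintype.piFinset (fun _ => Finset.Icc (-(B : ℤ)) (B : ℤ))
    with hBoxdef
  choose wfin hwfin using fun (r : Fin n → ℤ) (v : G.V0) => hsc ((0 : Fin n → ℤ), x₀.2) (r, v)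
  set Cfin : ℕ := Box.sup (fun r => Finset.univ.sup (wfin r)) with hCfindef
  refine ⟨∑ v : G.V0, ((wconn v x₀.2 : ℝ) + sA (c v)), 1 + (Cc : ℝ) + (Cfin : ℝ),
    Finset.sum_nonneg fun v _ => add_nonneg (Nat.cast_nonneg _) (hsA0 _), by positivity, ?_⟩
  intro y
  constructor
  · -- lower bound
    have hdist : G.Reaches x₀ y (G.dist x₀ y) := Nat.sInf_mem (hsc x₀ y)
    obtain ⟨l, hlc, hlv, hlw, hlh, hll, hlnil⟩ := G.exists_list_of_reaches hdist
    obtain ⟨ret, hrc, hrv, hrw, hrh, hrl, hrnil⟩ := G.exists_list_of_reaches (hwconn y.2 x₀.2)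
    have hrv0 : G.qvec ret = 0 := by rw [hrv]; simp
    have hLc : (l ++ ret).Chain' (fun e f => G.tgtV e = G.srcV f) := by
      change List.IsChain _ _
      rw [List.isChain_append]
      refine ⟨hlc, hrc, ?_⟩
      intro a ha b hb
      rw [hll a ha]
      exact (hrh b hb).symm
    have hLclosed : ∀ a ∈ (l ++ ret).getLast?, ∀ b ∈ (l ++ ret).head?,
        G.tgtV a = G.srcV b := by
      intro a ha b hb
      have hta : G.tgtV a = x₀.2 := by
        rw [List.getLast?_append] at ha
        rcases PeriodicGraph.mem_or_cases ha with h1 | ⟨hnone, h2⟩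
        · exact hrl a h1
        · have hretnil : ret = [] := by
            cases hretc : ret with
            | nil => rfl
            | cons q qs =>
                rw [hretc, List.getLast?_eq_getLast (by simp)] at hnone
                simp at hnone
          have h3 : y.2 = x₀.2 := by
            have h := hrnil hretnil
            simpa [Prod.ext_iff] using h
          rw [hll a h2, h3]
      have hsb : G.srcV b = x₀.2 := by
        rw [List.head?_append] at hb
        rcases PeriodicGraph.mem_or_cases hb with h1 | ⟨hnone, h2⟩
        · exact hlh b h1
        · have hlnil' : l = [] := by
            cases hlc0 : l with
            | nil => rfl
            | cons q qs =>
                rw [hlc0, List.head?_eq_head (by simp)] at hnone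
                simp at hnone
          have hxy : x₀ = y := hlnil hlnil'
          have h2' := hrh b h2
          rw [hxy]
          exact h2'
      rw [hta, hsb]
    have hmem := G.closed_mem_smul (l ++ ret) hLc hLclosed
    have hqv : G.qvec (l ++ ret) = y.1 - x₀.1 := by
      rw [PeriodicGraph.qvec_append, hlv, hrv0]; simp
    have hqw : G.qwt (l ++ ret) = G.dist x₀ y + wconn y.2 x₀.2 := by
      rw [PeriodicGraph.qwt_append, hlw, hrw]
    rw [hqv] at hmem
    have hmem2 : Φ y - Φ x₀ ∈ ((G.qwt (l ++ ret) : ℝ) + sA (c y.2)) • P := by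
      rw [hΦsplit y]
      exact G.mem_smul_add (Nat.cast_nonneg _) (hsA0 _) hmem (hsAm _)
    have hle := PeriodicGraph.pgauge_le (add_nonneg (Nat.cast_nonneg _) (hsA0 _)) hmem2
    have hsingle : (wconn y.2 x₀.2 : ℝ) + sA (c y.2)
        ≤ ∑ v : G.V0, ((wconn v x₀.2 : ℝ) + sA (c v)) :=
      Finset.single_le_sum (f := fun v => (wconn v x₀.2 : ℝ) + sA (c v))
        (fun v _ => add_nonneg (Nat.cast_nonneg _) (hsA0 _)) (Finset.mem_univ y.2)
    have hcast : (G.qwt (l ++ ret) : ℝ) = (G.dist x₀ y : ℝ) + (wconn y.2 x₀.2 : ℝ) := by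
      rw [hqw]; push_cast; ring
    rw [hcast] at hle
    linarith
  · -- upper bound
    have hΔ := hΦsplit y
    set Δ := Φ y - Φ x₀ with hΔdef
    set g := PeriodicGraph.pgauge P Δ with hgdef
    have hg0 : 0 ≤ g := PeriodicGraph.pgauge_nonneg _ _
    have hTne : {t : ℝ | 0 ≤ t ∧ Δ ∈ t • P}.Nonempty := by
      obtain ⟨t, ht0, htm⟩ := G.absorb hsc x₀ Δ
      exact ⟨t, ht0, htm⟩
    have hbdd : BddBelow {t : ℝ | 0 ≤ t ∧ Δ ∈ t • P} := ⟨0, fun s hs => hs.1⟩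
    have hglt : sInf {t : ℝ | 0 ≤ t ∧ Δ ∈ t • P} < g + 1 := by
      have : sInf {t : ℝ | 0 ≤ t ∧ Δ ∈ t • P} = g := rfl
      rw [this]; linarith
    obtain ⟨t, ⟨ht0, htm⟩, htlt⟩ := (csInf_lt_iff hbdd hTne).1 hglt
    have hΔmem : Δ ∈ (g + 1) • P := G.smul_mono_P ht0 (le_of_lt htlt) htm
    obtain ⟨d, hd, hdeq⟩ := hΔmem
    rw [hPhull, Finset.convexHull_eq] at hd
    obtain ⟨wgt, hwgt0, hwgt1, hwgtc⟩ := hd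
    rw [Finset.centerMass_eq_of_sum_1 _ _ hwgt1] at hwgtc
    set m : (Fin n → ℝ) → ℕ := fun p => ⌊(g + 1) * wgt p / (G.qwt (cyc p) : ℝ)⌋₊ with hmdef
    set δ : (Fin n → ℝ) → (Fin n → ℤ) := fun p => m p • G.qvec (cyc p) with hδdef
    set ω : (Fin n → ℝ) → ℕ := fun p => connW p + m p * G.qwt (cyc p) with hωdef
    have hstage : ∀ p ∈ F₀, ∀ u : Fin n → ℤ, G.Reaches (u, x₀.2) (u + δ p, x₀.2) (ω p) := by
      intro p hp u
      by_cases hpS : p ∈ Sfin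
      · obtain ⟨⟨hne, hchain, hclosed, -⟩, -⟩ := hcyc p hpS
        have hshd : shd p = G.srcV ((cyc p).head hne) := by
          simp only [hshddef]
          rw [dif_pos hne]
        have h1 : G.Reaches (u, x₀.2) (u, shd p) (wconn x₀.2 (shd p)) := by
          have h := PeriodicGraph.Reaches.translate G u (hwconn x₀.2 (shd p))
          simpa using h
        have h2 : G.Reaches (u, shd p) (u + δ p, shd p) (m p * G.qwt (cyc p)) := by
          rw [hshd, hδdef]
          exact G.cycle_reaches hne hchain hclosed (m p) u
        have h3 : G.Reaches (u + δ p, shd p) (u + δ p, x₀.2) (wconn (shd p) x₀.2) := by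
          have h := PeriodicGraph.Reaches.translate G (u + δ p) (hwconn (shd p) x₀.2)
          simpa using h
        have h4 := PeriodicGraph.Reaches.trans G (PeriodicGraph.Reaches.trans G h1 h2) h3
        have hωeq : ω p = wconn x₀.2 (shd p) + m p * G.qwt (cyc p) + wconn (shd p) x₀.2 := by
          simp only [hωdef, hconnWdef]
          rw [if_pos hpS]
          ring
        rw [hωeq]
        exact h4
      · have hnil := hcycnil p hpS
        have hδ0 : δ p = 0 := by simp [hδdef, hnil]
        have hω0 : ω p = 0 := by
          simp [hωdef, hconnWdef, hpS, hnil, PeriodicGraph.qwt_nil]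
        rw [hδ0, hω0]
        simpa using PeriodicGraph.Reaches.refl (G := G) (u, x₀.2)
    have htour := G.tour x₀.2 δ ω F₀ hstage x₀.1
    set r : Fin n → ℤ := y.1 - (x₀.1 + ∑ p ∈ F₀, δ p) with hrdef
    have hfinstep := PeriodicGraph.Reaches.translate G (x₀.1 + ∑ p ∈ F₀, δ p) (hwfin r y.2)
    have hreach : G.Reaches x₀ y (∑ p ∈ F₀, ω p + wfin r y.2) := by
      have h5 : (x₀.1 + ∑ p ∈ F₀, δ p) + r = y.1 := by rw [hrdef]; abel
      have h6 : G.Reaches (x₀.1 + ∑ p ∈ F₀, δ p, x₀.2) (y.1, y.2) (wfin r y.2) := by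
        have := hfinstep
        rw [add_zero] at this
        simpa [h5] using this
      exact PeriodicGraph.Reaches.trans G htour h6
    have hdistle : G.dist x₀ y ≤ ∑ p ∈ F₀, ω p + wfin r y.2 := Nat.sInf_le hreach
    -- bound on the cycle weights
    have hsum_m : (∑ p ∈ F₀, ((m p * G.qwt (cyc p) : ℕ) : ℝ)) ≤ g + 1 := by
      have hper : ∀ p ∈ F₀, ((m p * G.qwt (cyc p) : ℕ) : ℝ) ≤ (g + 1) * wgt p := by
        intro p hp
        by_cases hpS : p ∈ Sfin
        · obtain ⟨⟨hne, -, -, -⟩, -⟩ := hcyc p hpS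
          have hq : (0 : ℝ) < (G.qwt (cyc p) : ℝ) := by exact_mod_cast G.qwt_pos hne
          have harg : 0 ≤ (g + 1) * wgt p / (G.qwt (cyc p) : ℝ) := by
            apply div_nonneg _ (le_of_lt hq)
            exact mul_nonneg (by linarith) (hwgt0 p hp)
          have hfl : (m p : ℝ) ≤ (g + 1) * wgt p / (G.qwt (cyc p) : ℝ) := by
            simp only [hmdef]
            exact Nat.floor_le harg
          calc ((m p * G.qwt (cyc p) : ℕ) : ℝ) = (m p : ℝ) * (G.qwt (cyc p) : ℝ) := by
                push_cast; ring
            _ ≤ ((g + 1) * wgt p / (G.qwt (cyc p) : ℝ)) * (G.qwt (cyc p) : ℝ) :=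
                mul_le_mul_of_nonneg_right hfl (le_of_lt hq)
            _ = (g + 1) * wgt p := div_mul_cancel₀ _ (ne_of_gt hq)
        · have hnil := hcycnil p hpS
          have : ((m p * G.qwt (cyc p) : ℕ) : ℝ) = 0 := by
            rw [hnil]; simp
          rw [this]
          exact mul_nonneg (by linarith) (hwgt0 p hp)
      calc (∑ p ∈ F₀, ((m p * G.qwt (cyc p) : ℕ) : ℝ)) ≤ ∑ p ∈ F₀, (g + 1) * wgt p :=
            Finset.sum_le_sum hper
        _ = (g + 1) * ∑ p ∈ F₀, wgt p := by rw [Finset.mul_sum]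
        _ = g + 1 := by rw [hwgt1, mul_one]
    -- coordinate bound on r
    set θ : (Fin n → ℝ) → ℝ := fun p => (g + 1) * wgt p / (G.qwt (cyc p) : ℝ) - m p with hθdef
    have hθbound : ∀ p ∈ F₀, 0 ≤ θ p ∧ θ p ≤ 1 := by
      intro p hp
      by_cases hpS : p ∈ Sfin
      · obtain ⟨⟨hne, -, -, -⟩, -⟩ := hcyc p hpS
        have hq : (0 : ℝ) < (G.qwt (cyc p) : ℝ) := by exact_mod_cast G.qwt_pos hne
        have harg : 0 ≤ (g + 1) * wgt p / (G.qwt (cyc p) : ℝ) := by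
          apply div_nonneg _ (le_of_lt hq)
          exact mul_nonneg (by linarith) (hwgt0 p hp)
        constructor
        · simp only [hθdef, hmdef, sub_nonneg]
          exact Nat.floor_le harg
        · simp only [hθdef, hmdef]
          have := Nat.lt_floor_add_one ((g + 1) * wgt p / (G.qwt (cyc p) : ℝ))
          linarith
      · have hnil := hcycnil p hpS
        have h0 : (g + 1) * wgt p / (G.qwt (cyc p) : ℝ) = 0 := by
          rw [hnil]; simp
        constructor
        · simp only [hθdef, hmdef]
          rw [h0]
          simp
        · simp only [hθdef, hmdef]
          rw [h0]
          simp
    have hzcr : PeriodicGraph.zc r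
        = (∑ p ∈ F₀, θ p • PeriodicGraph.zc (G.qvec (cyc p))) - c y.2 := by
      have h7 : PeriodicGraph.zc (y.1 - x₀.1) = Δ - c y.2 := by
        rw [hΔ]; abel
      have h8 : Δ = ∑ p ∈ F₀, ((g + 1) * wgt p) • p := by
        rw [← hdeq, ← hwgtc]
        show (g + 1) • (∑ i ∈ F₀, wgt i • id i) = _
        rw [Finset.smul_sum]
        apply Finset.sum_congr rfl
        intro p _
        rw [smul_smul, id_eq]
      have h9 : ∀ p ∈ F₀, ((g + 1) * wgt p) • p
          - (m p : ℝ) • PeriodicGraph.zc (G.qvec (cyc p))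
          = θ p • PeriodicGraph.zc (G.qvec (cyc p)) := by
        intro p hp
        by_cases hpS : p ∈ Sfin
        · have hnu := (hcyc p hpS).2
          have hpeq : p = (G.qwt (cyc p) : ℝ)⁻¹ • PeriodicGraph.zc (G.qvec (cyc p)) := by
            conv_lhs => rw [← hnu]
            rw [PeriodicGraph.nu_eq]
          have hap : ∀ aa : ℝ, aa • p
              = (aa / (G.qwt (cyc p) : ℝ)) • PeriodicGraph.zc (G.qvec (cyc p)) := by
            intro aa
            conv_lhs => rw [hpeq]
            rw [smul_smul, div_eq_mul_inv]
          rw [hap ((g + 1) * wgt p)]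
          simp only [hθdef]
          rw [sub_smul]
        · have hp0 : p = 0 := by
            rcases Finset.mem_insert.1 (hF₀ ▸ hp) with h | h
            · exact h
            · exact absurd h hpS
          have hnil := hcycnil p hpS
          subst hp0
          simp [hnil]
      calc PeriodicGraph.zc r
          = PeriodicGraph.zc (y.1 - x₀.1) - ∑ p ∈ F₀, PeriodicGraph.zc (δ p) := by
            rw [hrdef]
            rw [show y.1 - (x₀.1 + ∑ p ∈ F₀, δ p) = (y.1 - x₀.1) - ∑ p ∈ F₀, δ p from by abel]
            rw [PeriodicGraph.zc_sub, PeriodicGraph.zc_finsum]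
        _ = (Δ - c y.2) - ∑ p ∈ F₀, (m p : ℝ) • PeriodicGraph.zc (G.qvec (cyc p)) := by
            rw [h7]
            congr 1
            apply Finset.sum_congr rfl
            intro p _
            simp only [hδdef]
            exact PeriodicGraph.zc_nsmul _ _
        _ = (∑ p ∈ F₀, (((g + 1) * wgt p) • p
              - (m p : ℝ) • PeriodicGraph.zc (G.qvec (cyc p)))) - c y.2 := by
            rw [h8, Finset.sum_sub_distrib]
            abel
        _ = (∑ p ∈ F₀, θ p • PeriodicGraph.zc (G.qvec (cyc p))) - c y.2 := by
            rw [Finset.sum_congr rfl h9]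
    have hri : ∀ i, |r i| ≤ (B : ℤ) := by
      intro i
      have h10 : |PeriodicGraph.zc r i| ≤ M₁ + M₂ := by
        rw [hzcr]
        have habs1 : |(∑ p ∈ F₀, θ p • PeriodicGraph.zc (G.qvec (cyc p))) i - c y.2 i|
            ≤ |(∑ p ∈ F₀, θ p • PeriodicGraph.zc (G.qvec (cyc p))) i| + |c y.2 i| :=
          abs_sub _ _
        have habs2 : |(∑ p ∈ F₀, θ p • PeriodicGraph.zc (G.qvec (cyc p))) i| ≤ M₁ := by
          rw [Finset.sum_apply]
          refine le_trans (Finset.abs_sum_le_sum_abs _ _) ?_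
          rw [hM₁def]
          apply Finset.sum_le_sum
          intro p hp
          have hterm : |(θ p • PeriodicGraph.zc (G.qvec (cyc p))) i|
              = θ p * |((G.qvec (cyc p)) i : ℝ)| := by
            rw [Pi.smul_apply, smul_eq_mul, abs_mul, abs_of_nonneg (hθbound p hp).1]
            rfl
          rw [hterm]
          calc θ p * |((G.qvec (cyc p)) i : ℝ)| ≤ 1 * |((G.qvec (cyc p)) i : ℝ)| :=
                mul_le_mul_of_nonneg_right (hθbound p hp).2 (abs_nonneg _)
            _ = |((G.qvec (cyc p)) i : ℝ)| := one_mul _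
            _ ≤ ∑ j : Fin n, |((G.qvec (cyc p)) j : ℝ)| :=
                Finset.single_le_sum (f := fun j => |((G.qvec (cyc p)) j : ℝ)|)
                  (fun j _ => abs_nonneg _) (Finset.mem_univ i)
        have habs3 : |c y.2 i| ≤ M₂ := by
          rw [hM₂def]
          calc |c y.2 i| ≤ ∑ j : Fin n, |c y.2 j| :=
                Finset.single_le_sum (f := fun j => |c y.2 j|) (fun j _ => abs_nonneg _)
                  (Finset.mem_univ i)
            _ ≤ ∑ v : G.V0, ∑ j : Fin n, |c v j| :=
                Finset.single_le_sum (f := fun v => ∑ j : Fin n, |c v j|)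
                  (fun v _ => Finset.sum_nonneg fun j _ => abs_nonneg _)
                  (Finset.mem_univ y.2)
        calc |(∑ p ∈ F₀, θ p • PeriodicGraph.zc (G.qvec (cyc p))) i - c y.2 i|
            ≤ |(∑ p ∈ F₀, θ p • PeriodicGraph.zc (G.qvec (cyc p))) i| + |c y.2 i| := habs1
          _ ≤ M₁ + M₂ := add_le_add habs2 habs3
      have h11 : ((|r i| : ℤ) : ℝ) ≤ ((B : ℤ) : ℝ) := by
        rw [Int.cast_abs]
        have : ((r i : ℤ) : ℝ) = PeriodicGraph.zc r i := rfl
        rw [this]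
        calc |PeriodicGraph.zc r i| ≤ M₁ + M₂ := h10
          _ ≤ ((B : ℕ) : ℝ) := by rw [hBdef]; exact Nat.le_ceil _
          _ = ((B : ℤ) : ℝ) := by push_cast; rfl
      exact_mod_cast h11
    have hrBox : r ∈ Box := by
      rw [hBoxdef, Fintype.mem_piFinset]
      intro i
      rw [Finset.mem_Icc]
      have h := abs_le.1 (hri i)
      exact ⟨h.1, h.2⟩
    have hwfinle : wfin r y.2 ≤ Cfin := by
      rw [hCfindef]
      exact le_trans (Finset.le_sup (f := wfin r) (Finset.mem_univ y.2))
        (Finset.le_sup (f := fun r' => Finset.univ.sup (wfin r')) hrBox)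
    have hωsum : (∑ p ∈ F₀, ω p) = Cc + ∑ p ∈ F₀, m p * G.qwt (cyc p) := by
      rw [hCcdef, ← Finset.sum_add_distrib]
    have h12 : (G.dist x₀ y : ℝ) ≤ ((∑ p ∈ F₀, ω p : ℕ) : ℝ) + ((wfin r y.2 : ℕ) : ℝ) := by
      exact_mod_cast hdistle
    have h13 : ((∑ p ∈ F₀, ω p : ℕ) : ℝ) = (Cc : ℝ) + ∑ p ∈ F₀, ((m p * G.qwt (cyc p) : ℕ) : ℝ) := by
      rw [hωsum]; push_cast; ring
    have h14 : ((wfin r y.2 : ℕ) : ℝ) ≤ (Cfin : ℝ) := by exact_mod_cast hwfinle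
    rw [h13] at h12
    linarith
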